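/- Let H be a 2-dimensional Hilbert space and P_0,...,P_4 projections on H with P_i P_{i+1} = 0 for all i (indices mod 5). Then at least one P_j = 0, and consequently for every unit vector Ψ ∈ H, ⟨Ψ, (P_0+P_1+P_2+P_3+P_4)Ψ⟩ ≤ 2. -/

import Mathlib

open scoped ComplexOrder InnerProductSpace

/-- On a 2-dimensional Hilbert space, five projections with cyclically
adjacent products zero must include the zero projection, and consequently no
vector state violates the KCBS inequality. -/
theorem qubit_does_not_violate_kcbs
    {H : Type*} [NormedAddCommGroup H] [InnerProductSpace ℂ H]
    [FiniteDimensional ℂ H] (hdim : Module.finrank ℂ H = 2)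
    (P : Fin 5 → (H →L[ℂ] H))
    (hsa : ∀ i, IsSelfAdjoint (P i))
    (hidem : ∀ i, P i * P i = P i)
    (horth : ∀ i, P i * P (i + 1) = 0) :
    (∃ j, P j = 0) ∧
    ∀ Ψ : H, ‖Ψ‖ = 1 → ⟪Ψ, (∑ i, P i) Ψ⟫_ℂ ≤ 2 := by
  classical
  -- adjoint relation
  have hadj : ∀ i (x y : H), ⟪P i x, y⟫_ℂ = ⟪x, P i y⟫_ℂ := by
    intro i x y
    conv_lhs => rw [← (hsa i).adjoint_eq]
    exact ContinuousLinearMap.adjoint_inner_left _ _ _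
  -- ranges
  set V : Fin 5 → Submodule ℂ H := fun i => LinearMap.range (P i : H →ₗ[ℂ] H) with hV
  have horthV : ∀ i, V (i + 1) ≤ (V i)ᗮ := by
    intro i y hy
    obtain ⟨z, rfl⟩ := hy
    intro x hx
    obtain ⟨w, rfl⟩ := hx
    show ⟪P i w, P (i + 1) z⟫_ℂ = 0
    rw [hadj i, ← ContinuousLinearMap.comp_apply, ← ContinuousLinearMap.mul_def,
      horth i]
    simp
  -- Part 1: some projection is zero
  have hzero : ∃ j, P j = 0 := by
    by_contra hne
    push_neg at hne
    have hpos : ∀ i, 1 ≤ Module.finrank ℂ (V i) := by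
      intro i
      rw [Nat.one_le_iff_ne_zero]
      intro h0
      apply hne i
      have : V i = ⊥ := Submodule.finrank_eq_zero.mp h0
      have hr : LinearMap.range (P i : H →ₗ[ℂ] H) = ⊥ := this
      rw [LinearMap.range_eq_bot] at hr
      ext x
      have := DFunLike.congr_fun hr x
      simpa using this
    have hsum : ∀ i, Module.finrank ℂ (V i) + Module.finrank ℂ ((V i)ᗮ) = 2 := by
      intro i
      rw [Submodule.finrank_add_finrank_orthogonal, hdim]
    have hone : ∀ i, Module.finrank ℂ (V i) = 1 := by
      intro i
      have h1 := Submodule.finrank_mono (horthV i)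
      have := hsum i
      have := hpos i
      have := hpos (i + 1)
      omega
    have heq : ∀ i, V (i + 1) = (V i)ᗮ := by
      intro i
      refine Submodule.eq_of_le_of_finrank_eq (horthV i) ?_
      have := hsum i
      rw [hone i] at this
      rw [hone (i + 1)]
      omega
    -- chain around the cycle
    have h1 : V 1 = (V 0)ᗮ := heq 0
    have h2 : V 2 = (V 1)ᗮ := heq 1
    have h3 : V 3 = (V 2)ᗮ := heq 2
    have h4 : V 4 = (V 3)ᗮ := heq 3
    have h0 : V 0 = (V 4)ᗮ := by
      have := heq 4
      norm_num at this
      exact this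
    have e2 : V 2 = V 0 := by rw [h2, h1, Submodule.orthogonal_orthogonal]
    have e3 : V 3 = (V 0)ᗮ := by rw [h3, e2]
    have e4 : V 4 = V 0 := by rw [h4, e3, Submodule.orthogonal_orthogonal]
    have hVV : V 0 = (V 0)ᗮ := h0.trans (by rw [e4])
    have hbot : V 0 = ⊥ := by
      rw [eq_bot_iff]
      intro x hx
      have hx' : x ∈ (V 0)ᗮ := hVV ▸ hx
      have : ⟪x, x⟫_ℂ = 0 := hx' x hx
      simpa using inner_self_eq_zero.mp this
    have := hone 0
    rw [hbot] at this
    simp at this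
  refine ⟨hzero, ?_⟩
  -- Part 2
  intro Ψ hΨ
  -- each term equals ‖P i Ψ‖²
  have hterm : ∀ i, ⟪Ψ, P i Ψ⟫_ℂ = (‖P i Ψ‖ ^ 2 : ℝ) := by
    intro i
    have : P i (P i Ψ) = P i Ψ := by
      conv_rhs => rw [← hidem i]
      rfl
    rw [← this, ← hadj i, this, inner_self_eq_norm_sq_to_K]
    norm_cast
  -- a pair lemma: for orthogonal pair, sum of norms squared ≤ 1
  have hpair : ∀ i, ‖P i Ψ‖ ^ 2 + ‖P (i + 1) Ψ‖ ^ 2 ≤ 1 := by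
    intro i
    set R : H →L[ℂ] H := P i + P (i + 1) with hR
    have hqp : P (i + 1) * P i = 0 := by
      have := horth i
      have h := congrArg star this
      rw [star_mul, star_zero, (hsa i).star_eq, (hsa (i + 1)).star_eq] at h
      exact h
    have hRidem : R * R = R := by
      rw [hR]
      rw [mul_add, add_mul, add_mul, hidem i, hidem (i + 1), horth i, hqp]
      abel
    have hRsa : IsSelfAdjoint R := (hsa i).add (hsa (i + 1))
    have hRadj : ∀ x y : H, ⟪R x, y⟫_ℂ = ⟪x, R y⟫_ℂ := by
      intro x y
      conv_lhs => rw [← hRsa.adjoint_eq]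
      exact ContinuousLinearMap.adjoint_inner_left _ _ _
    have hRR : R (R Ψ) = R Ψ := by
      conv_rhs => rw [← hRidem]
      rfl
    have hnormR : ‖R Ψ‖ ^ 2 = (⟪Ψ, R Ψ⟫_ℂ).re := by
      rw [← hRR, ← hRadj, hRR]
      rw [inner_self_eq_norm_sq_to_K]
      norm_cast
    have hle : ‖R Ψ‖ ^ 2 ≤ ‖R Ψ‖ := by
      rw [hnormR]
      calc (⟪Ψ, R Ψ⟫_ℂ).re ≤ ‖⟪Ψ, R Ψ⟫_ℂ‖ := Complex.re_le_norm _
        _ ≤ ‖Ψ‖ * ‖R Ψ‖ := norm_inner_le_norm _ _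
        _ = ‖R Ψ‖ := by rw [hΨ, one_mul]
    have hRle : ‖R Ψ‖ ≤ 1 := by
      nlinarith [norm_nonneg (R Ψ)]
    -- orthogonality of P i Ψ and P (i+1) Ψ
    have hperp : ⟪P i Ψ, P (i + 1) Ψ⟫_ℂ = 0 := by
      rw [hadj i, ← ContinuousLinearMap.comp_apply, ← ContinuousLinearMap.mul_def,
        horth i]
      simp
    have hpyth : ‖R Ψ‖ ^ 2 = ‖P i Ψ‖ ^ 2 + ‖P (i + 1) Ψ‖ ^ 2 := by
      have : R Ψ = P i Ψ + P (i + 1) Ψ := rfl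
      rw [this]
      simpa [pow_two] using
        norm_add_sq_eq_norm_sq_add_norm_sq_of_inner_eq_zero _ _ hperp
    have : ‖R Ψ‖ ^ 2 ≤ 1 := by nlinarith [norm_nonneg (R Ψ)]
    linarith [hpyth ▸ this]
  obtain ⟨j, hj⟩ := hzero
  -- reindex the sum
  have hre : (∑ i, P i) Ψ = ∑ i, P (j + i) Ψ := by
    rw [ContinuousLinearMap.sum_apply]
    exact (Fintype.sum_equiv (Equiv.addLeft j) (fun i => P (j + i) Ψ)
      (fun i => P i Ψ) (fun i => rfl)).symm
  have hsum5 : ⟪Ψ, (∑ i, P i) Ψ⟫_ℂ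
      = ∑ i : Fin 5, ⟪Ψ, P (j + i) Ψ⟫_ℂ := by
    rw [hre, inner_sum]
  rw [hsum5, Fin.sum_univ_five]
  have hj0 : P (j + 0) = 0 := by simpa using hj
  rw [hj0]
  simp only [ContinuousLinearMap.zero_apply, inner_zero_right, zero_add]
  rw [hterm, hterm, hterm, hterm]
  have h12 := hpair (j + 1)
  have h34 := hpair (j + 3)
  have e12 : (j + 1) + 1 = j + 2 := by rw [add_assoc]; rfl
  have e34 : (j + 3) + 1 = j + 4 := by rw [add_assoc]; rfl
  rw [e12] at h12
  rw [e34] at h34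
  have : (‖P (j + 1) Ψ‖ ^ 2 + ‖P (j + 2) Ψ‖ ^ 2 : ℝ)
      + (‖P (j + 3) Ψ‖ ^ 2 + ‖P (j + 4) Ψ‖ ^ 2) ≤ 2 := by linarith
  push_cast
  calc ((‖P (j + 1) Ψ‖ : ℂ) ^ 2 + (‖P (j + 2) Ψ‖ : ℂ) ^ 2
      + (‖P (j + 3) Ψ‖ : ℂ) ^ 2 + (‖P (j + 4) Ψ‖ : ℂ) ^ 2)
      = ((‖P (j + 1) Ψ‖ ^ 2 + ‖P (j + 2) Ψ‖ ^ 2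
      + ‖P (j + 3) Ψ‖ ^ 2 + ‖P (j + 4) Ψ‖ ^ 2 : ℝ) : ℂ) := by push_cast; ring
    _ ≤ ((2 : ℝ) : ℂ) := by
        rw [Complex.real_le_real]
        linarith
    _ = 2 := by norm_num
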